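/- Iterated trace formula: for Φ ∈ Λ^k V* ⊗ Λ^h W and r ≥ 0, tr^{r+1}(θ ⩕ Φ) = θ ⩕ tr^{r+1}(Φ) + (r+1)(m − k − h + r) tr^r(Φ). -/

import Mathlib

open TensorProduct ExteriorAlgebra

set_option maxHeartbeats 1000000
set_option synthInstance.maxHeartbeats 400000

noncomputable section

/-- Wedge product of a finite family of vectors, as an element of the exterior algebra. -/
def wedgeL {M : Type} [AddCommGroup M] [Module ℝ M] {n : ℕ} (v : Fin n → M) :
    ExteriorAlgebra ℝ M :=
  (List.ofFn fun i => ι ℝ (v i)).prod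

/-- The bigraded algebra `Λ V* ⊗ Λ ℝ^m` of vector-valued forms, with `U` playing the
role of `V*` and `Fin m → ℝ` the role of `W = ℝ^m`. -/
abbrev Omega (U : Type) [AddCommGroup U] [Module ℝ U] (m : ℕ) : Type :=
  ExteriorAlgebra ℝ U ⊗[ℝ] ExteriorAlgebra ℝ (Fin m → ℝ)

/-- The subspace of bidegree `(k, h)` elements: `Λ^k U ⊗ Λ^h ℝ^m`. -/
def bideg (U : Type) [AddCommGroup U] [Module ℝ U] (m k h : ℕ) :
    Submodule ℝ (Omega U m) :=
  Submodule.map₂ (TensorProduct.mk ℝ _ _) (⋀[ℝ]^k U) (⋀[ℝ]^h (Fin m → ℝ))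

/-- The solder element `θ = Σ_a θ^a ⊗ T_a`, where `T_a` is the standard basis of `ℝ^m`. -/
def solder {U : Type} [AddCommGroup U] [Module ℝ U] {m : ℕ} (u : Fin m → U) : Omega U m :=
  ∑ a, ι ℝ (u a) ⊗ₜ[ℝ] ι ℝ (Pi.single a 1)

/-- The composite volume element `ν = ν_g ⊗ n_h` (wedge of the dual orthonormal basis
tensor the wedge of the standard basis). -/
def vol {U : Type} [AddCommGroup U] [Module ℝ U] {m : ℕ} (u : Fin m → U) : Omega U m :=
  wedgeL u ⊗ₜ[ℝ] wedgeL (fun a : Fin m => Pi.single a (1 : ℝ))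

/-- The trace operator: contraction with `θ^♯`, i.e. `tr Φ = Σ_a (ι_{(u a)^♯} ⊗ ι_{(T a)^♭}) Φ`. -/
def trOp {U : Type} [AddCommGroup U] [Module ℝ U] {m : ℕ} (u : Fin m → U)
    (cU : U → Module.End ℝ (ExteriorAlgebra ℝ U))
    (cW : (Fin m → ℝ) → Module.End ℝ (ExteriorAlgebra ℝ (Fin m → ℝ))) :
    Module.End ℝ (Omega U m) :=
  ∑ a, TensorProduct.map (cU (u a)) (cW (Pi.single a 1))

variable {M : Type} [AddCommGroup M] [Module ℝ M]

lemma iota_anticomm (x y : M) : ι ℝ x * ι ℝ y = - (ι ℝ y * ι ℝ x) := by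
  have h := ι_sq_zero (R := ℝ) (x + y)
  simp only [map_add, add_mul, mul_add, ι_sq_zero] at h
  have h2 : ι ℝ y * ι ℝ x + ι ℝ x * ι ℝ y = 0 := by
    rw [← h]; abel
  exact eq_neg_of_add_eq_zero_left (by rw [← h2]; abel)

lemma wedgeL_cons {n : ℕ} (y : M) (v : Fin n → M) :
    wedgeL (Fin.cons y v) = ι ℝ y * wedgeL v := by
  simp [wedgeL, List.ofFn_succ]

lemma insert_erase {n : ℕ} (v : Fin n → M) (i : Fin n) :
    ι ℝ (v i) * ((List.ofFn fun j => ι ℝ (v j)).eraseIdx (i : ℕ)).prod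
      = ((-1 : ℝ) ^ (i : ℕ)) • (List.ofFn fun j => ι ℝ (v j)).prod := by
  induction n with
  | zero => exact i.elim0
  | succ n ih =>
    rw [List.ofFn_succ]
    refine Fin.cases ?_ ?_ i
    · simp
    · intro j
      rw [Fin.val_succ, List.eraseIdx_cons_succ, List.prod_cons, ← mul_assoc,
        iota_anticomm (v j.succ) (v 0), neg_mul, mul_assoc]
      have := ih (fun j => v j.succ) j
      rw [this, List.prod_cons]
      simp [pow_succ, mul_smul_comm, mul_smul]

section contraction
variable (B : M →ₗ[ℝ] M →ₗ[ℝ] ℝ) (c : M → Module.End ℝ (ExteriorAlgebra ℝ M))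
variable (hc : ∀ (x : M) (n : ℕ) (v : Fin n → M),
      c x (wedgeL v) = ∑ i : Fin n, ((-1 : ℝ) ^ (i : ℕ) * B x (v i)) •
        ((List.ofFn fun j => ι ℝ (v j)).eraseIdx (i : ℕ)).prod)

include hc

/-- Leibniz rule on wedges. -/
lemma leibniz (x y : M) {n : ℕ} (v : Fin n → M) :
    c x (ι ℝ y * wedgeL v) = B x y • wedgeL v - ι ℝ y * c x (wedgeL v) := by
  rw [← wedgeL_cons, hc x (n+1) (Fin.cons y v), Fin.sum_univ_succ]
  have hlist : (List.ofFn fun j => ι ℝ (Fin.cons y v j)) = ι ℝ y :: (List.ofFn fun j => ι ℝ (v j)) := by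
    rw [List.ofFn_succ]; simp
  rw [hlist]
  simp only [Fin.val_zero, pow_zero, one_mul, Fin.cons_zero, List.eraseIdx_cons_zero,
    Fin.val_succ, List.eraseIdx_cons_succ, List.prod_cons, Fin.cons_succ]
  rw [hc x n v, Finset.mul_sum, sub_eq_add_neg, ← Finset.sum_neg_distrib]
  congr 1
  refine Finset.sum_congr rfl fun i _ => ?_
  rw [mul_smul_comm, ← neg_smul]
  congr 1
  ring

end contraction

section numop
variable (B : M →ₗ[ℝ] M →ₗ[ℝ] ℝ) (c : M → Module.End ℝ (ExteriorAlgebra ℝ M))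
variable (hc : ∀ (x : M) (n : ℕ) (v : Fin n → M),
      c x (wedgeL v) = ∑ i : Fin n, ((-1 : ℝ) ^ (i : ℕ) * B x (v i)) •
        ((List.ofFn fun j => ι ℝ (v j)).eraseIdx (i : ℕ)).prod)
include hc

lemma numberOp {mm : ℕ} (f : Fin mm → M) (ε : Fin mm → ℝ)
    (hrec : ∀ x : M, ∑ a, (ε a * B (f a) x) • f a = x)
    {n : ℕ} (v : Fin n → M) :
    ∑ a, ε a • (ι ℝ (f a) * c (f a) (wedgeL v)) = (n : ℝ) • wedgeL v := by
  have step1 : ∀ a, ε a • (ι ℝ (f a) * c (f a) (wedgeL v))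
      = ∑ i : Fin n, (ε a * ((-1:ℝ)^(i:ℕ) * B (f a) (v i))) •
          (ι ℝ (f a) * ((List.ofFn fun j => ι ℝ (v j)).eraseIdx (i:ℕ)).prod) := by
    intro a
    rw [hc, Finset.mul_sum, Finset.smul_sum]
    exact Finset.sum_congr rfl fun i _ => by rw [mul_smul_comm, smul_smul]
  rw [Finset.sum_congr rfl (fun a _ => step1 a), Finset.sum_comm]
  have step2 : ∀ i : Fin n, (∑ a, (ε a * ((-1:ℝ)^(i:ℕ) * B (f a) (v i))) •
      (ι ℝ (f a) * ((List.ofFn fun j => ι ℝ (v j)).eraseIdx (i:ℕ)).prod)) = wedgeL v := by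
    intro i
    have h1 : ∀ a, (ε a * ((-1:ℝ)^(i:ℕ) * B (f a) (v i))) •
        (ι ℝ (f a) * ((List.ofFn fun j => ι ℝ (v j)).eraseIdx (i:ℕ)).prod)
        = ((-1:ℝ)^(i:ℕ)) • (((ε a * B (f a) (v i)) • ι ℝ (f a)) *
            ((List.ofFn fun j => ι ℝ (v j)).eraseIdx (i:ℕ)).prod) := by
      intro a
      rw [smul_mul_assoc, smul_smul]
      congr 1
      ring
    rw [Finset.sum_congr rfl (fun a _ => h1 a), ← Finset.smul_sum, ← Finset.sum_mul]
    have h2 : (∑ a, (ε a * B (f a) (v i)) • ι ℝ (f a)) = ι ℝ (v i) := by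
      conv_rhs => rw [← hrec (v i)]
      rw [map_sum]
      exact Finset.sum_congr rfl fun a _ => (map_smul _ _ _).symm
    rw [h2, insert_erase, smul_smul, ← mul_pow]
    norm_num
    rfl
  rw [Finset.sum_congr rfl (fun i _ => step2 i), Finset.sum_const]
  simp [Nat.cast_smul_eq_nsmul]
end numop

lemma exterior_span (n : ℕ) : (⋀[ℝ]^n M : Submodule ℝ (ExteriorAlgebra ℝ M))
    = Submodule.span ℝ (Set.range fun v : Fin n → M => wedgeL v) := by
  have he : (Set.range fun v : Fin n → M => wedgeL v)
      = Set.range (ιMulti ℝ n (M := M)) := by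
    congr 1
  rw [he, ιMulti_span_fixedDegree]


variable {U : Type} [AddCommGroup U] [Module ℝ U] {m : ℕ}

lemma bideg_le (k h : ℕ) (p : Submodule ℝ (Omega U m))
    (H : ∀ (v : Fin k → U) (w : Fin h → Fin m → ℝ), wedgeL v ⊗ₜ[ℝ] wedgeL w ∈ p) :
    bideg U m k h ≤ p := by
  refine Submodule.map₂_le.mpr ?_
  intro x hx y hy
  rw [exterior_span] at hx hy
  induction hx using Submodule.span_induction with
  | mem x hxw =>
    obtain ⟨v, rfl⟩ := hxw
    induction hy using Submodule.span_induction with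
    | mem y hyw =>
      obtain ⟨w, rfl⟩ := hyw
      exact H v w
    | zero => simpa using p.zero_mem
    | add y1 y2 _ _ p1 p2 =>
      rw [map_add]; exact p.add_mem p1 p2
    | smul a y _ p1 =>
      rw [map_smul]; exact p.smul_mem a p1
  | zero =>
    rw [map_zero, LinearMap.zero_apply]; exact p.zero_mem
  | add x1 x2 _ _ p1 p2 =>
    rw [map_add, LinearMap.add_apply]; exact p.add_mem p1 p2
  | smul a x _ p1 =>
    rw [map_smul, LinearMap.smul_apply]; exact p.smul_mem a p1

lemma eq_on_bideg (k h : ℕ) (L1 L2 : Module.End ℝ (Omega U m))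
    (H : ∀ (v : Fin k → U) (w : Fin h → Fin m → ℝ),
      L1 (wedgeL v ⊗ₜ[ℝ] wedgeL w) = L2 (wedgeL v ⊗ₜ[ℝ] wedgeL w)) :
    ∀ Φ ∈ bideg U m k h, L1 Φ = L2 Φ :=
  fun Φ hΦ => bideg_le k h (LinearMap.eqLocus L1 L2) H hΦ

section base
variable (g : U →ₗ[ℝ] U →ₗ[ℝ] ℝ) (η : (Fin m → ℝ) →ₗ[ℝ] (Fin m → ℝ) →ₗ[ℝ] ℝ)
variable (cU : U → Module.End ℝ (ExteriorAlgebra ℝ U))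
variable (cW : (Fin m → ℝ) → Module.End ℝ (ExteriorAlgebra ℝ (Fin m → ℝ)))
variable (u : Fin m → U) (ε : Fin m → ℝ)
variable (hcU : ∀ (x : U) (n : ℕ) (v : Fin n → U),
      cU x (wedgeL v) = ∑ i : Fin n, ((-1 : ℝ) ^ (i : ℕ) * g x (v i)) •
        ((List.ofFn fun j => ι ℝ (v j)).eraseIdx (i : ℕ)).prod)
variable (hcW : ∀ (y : Fin m → ℝ) (n : ℕ) (v : Fin n → (Fin m → ℝ)),
      cW y (wedgeL v) = ∑ i : Fin n, ((-1 : ℝ) ^ (i : ℕ) * η y (v i)) •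
        ((List.ofFn fun j => ι ℝ (v j)).eraseIdx (i : ℕ)).prod)
variable (hgab : ∀ a b, g (u b) (u a) = if b = a then ε a else 0)
variable (hηab : ∀ a b : Fin m, η (Pi.single b 1) (Pi.single a 1) = if b = a then ε a else 0)
variable (hrecU : ∀ x : U, ∑ a, (ε a * g (u a) x) • u a = x)
variable (hrecW : ∀ x : Fin m → ℝ, ∑ a, (ε a * η (Pi.single a 1) x) • (Pi.single a 1 : Fin m → ℝ) = x)
variable (hε : ∀ a, ε a * ε a = 1)

lemma trOp_tmul (x : ExteriorAlgebra ℝ U) (y : ExteriorAlgebra ℝ (Fin m → ℝ)) :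
    trOp u cU cW (x ⊗ₜ[ℝ] y) = ∑ b, (cU (u b)) x ⊗ₜ[ℝ] (cW (Pi.single b 1)) y := by
  rw [trOp, LinearMap.sum_apply]
  exact Finset.sum_congr rfl fun b _ => rfl

include hcU hcW hgab hηab hrecU hrecW hε in
lemma base_lemma {k h : ℕ} (v : Fin k → U) (w : Fin h → Fin m → ℝ) :
    trOp u cU cW (solder u * (wedgeL v ⊗ₜ[ℝ] wedgeL w))
      = solder u * trOp u cU cW (wedgeL v ⊗ₜ[ℝ] wedgeL w)
        + ((m : ℝ) - (k : ℝ) - (h : ℝ)) • (wedgeL v ⊗ₜ[ℝ] wedgeL w) := by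
  set x := wedgeL v with hx
  set y := wedgeL w with hy
  have expand : solder u * (x ⊗ₜ[ℝ] y)
      = ∑ a, (ι ℝ (u a) * x) ⊗ₜ[ℝ] (ι ℝ (Pi.single a 1) * y) := by
    rw [solder, Finset.sum_mul]
    exact Finset.sum_congr rfl fun a _ => Algebra.TensorProduct.tmul_mul_tmul _ _ _ _
  rw [expand, map_sum]
  have step : ∀ a, trOp u cU cW ((ι ℝ (u a) * x) ⊗ₜ[ℝ] (ι ℝ (Pi.single a 1) * y))
      = ∑ b, ((g (u b) (u a) * η (Pi.single b 1) (Pi.single a 1)) • (x ⊗ₜ[ℝ] y)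
          - g (u b) (u a) • (x ⊗ₜ[ℝ] (ι ℝ (Pi.single a 1) * cW (Pi.single b 1) y))
          - η (Pi.single b 1) (Pi.single a 1) • ((ι ℝ (u a) * cU (u b) x) ⊗ₜ[ℝ] y)
          + (ι ℝ (u a) * cU (u b) x) ⊗ₜ[ℝ] (ι ℝ (Pi.single a 1) * cW (Pi.single b 1) y)) := by
    intro a
    rw [trOp_tmul]
    refine Finset.sum_congr rfl fun b _ => ?_
    rw [hx, hy, leibniz g cU hcU, leibniz η cW hcW, TensorProduct.sub_tmul,
      TensorProduct.tmul_sub, TensorProduct.tmul_sub]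
    simp only [TensorProduct.tmul_smul, ← TensorProduct.smul_tmul', smul_smul]
    module
  rw [Finset.sum_congr rfl fun a _ => step a]
  simp only [Finset.sum_add_distrib, Finset.sum_sub_distrib]
  have S1 : (∑ a, ∑ b, (g (u b) (u a) * η (Pi.single b 1) (Pi.single a 1)) • (x ⊗ₜ[ℝ] y))
      = (m : ℝ) • (x ⊗ₜ[ℝ] y) := by
    have hco : ∀ a b : Fin m, g (u b) (u a) * η (Pi.single b 1) (Pi.single a 1)
        = if b = a then 1 else 0 := by
      intro a b
      rw [hgab, hηab]
      by_cases hba : b = a <;> simp [hba, hε a]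
    simp only [hco, ite_smul, zero_smul, Finset.sum_ite_eq', Finset.mem_univ, if_true, one_smul]
    rw [Finset.sum_const, Finset.card_univ, Fintype.card_fin, Nat.cast_smul_eq_nsmul]
  have S2 : (∑ a, ∑ b, g (u b) (u a) • (x ⊗ₜ[ℝ] (ι ℝ (Pi.single a 1) * cW (Pi.single b 1) y)))
      = (h : ℝ) • (x ⊗ₜ[ℝ] y) := by
    simp only [hgab, ite_smul, zero_smul, Finset.sum_ite_eq', Finset.mem_univ, if_true]
    have : ∀ a, ε a • (x ⊗ₜ[ℝ] (ι ℝ (Pi.single a 1) * cW (Pi.single a 1) y))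
        = x ⊗ₜ[ℝ] (ε a • (ι ℝ (Pi.single a 1) * cW (Pi.single a 1) y)) := by
      intro a; rw [TensorProduct.tmul_smul]
    rw [Finset.sum_congr rfl fun a _ => this a, ← TensorProduct.tmul_sum, hy,
      numberOp η cW hcW _ ε hrecW w, ← hy, TensorProduct.tmul_smul]
  have S3 : (∑ a, ∑ b, η (Pi.single b 1) (Pi.single a 1) • ((ι ℝ (u a) * cU (u b) x) ⊗ₜ[ℝ] y))
      = (k : ℝ) • (x ⊗ₜ[ℝ] y) := by
    simp only [hηab, ite_smul, zero_smul, Finset.sum_ite_eq', Finset.mem_univ, if_true]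
    have : ∀ a, ε a • ((ι ℝ (u a) * cU (u a) x) ⊗ₜ[ℝ] y)
        = (ε a • (ι ℝ (u a) * cU (u a) x)) ⊗ₜ[ℝ] y := by
      intro a; rw [TensorProduct.smul_tmul']
    rw [Finset.sum_congr rfl fun a _ => this a, ← TensorProduct.sum_tmul, hx,
      numberOp g cU hcU _ ε hrecU v, ← hx, TensorProduct.smul_tmul']
  have S4 : (∑ a, ∑ b, (ι ℝ (u a) * cU (u b) x) ⊗ₜ[ℝ] (ι ℝ (Pi.single a 1) * cW (Pi.single b 1) y))
      = solder u * trOp u cU cW (x ⊗ₜ[ℝ] y) := by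
    rw [trOp_tmul, solder, Finset.sum_mul_sum]
    exact Finset.sum_congr rfl fun a _ => Finset.sum_congr rfl fun b _ =>
      (Algebra.TensorProduct.tmul_mul_tmul _ _ _ _).symm
  rw [S1, S2, S3, S4, sub_smul, sub_smul]
  abel
end base

lemma list_prod_mem_pow {A : Type*} [Semiring A] [Algebra ℝ A] (p : Submodule ℝ A) :
    ∀ (l : List A), (∀ x ∈ l, x ∈ p) → l.prod ∈ p ^ l.length := by
  intro l
  induction l with
  | nil =>
    intro _
    rw [List.prod_nil, List.length_nil, pow_zero]
    exact Submodule.one_le.mp le_rfl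
  | cons a t ih =>
    intro hl
    rw [List.prod_cons, List.length_cons, pow_succ']
    exact Submodule.mul_mem_mul (hl a List.mem_cons_self) (ih fun x hx => hl x (List.mem_cons_of_mem a hx))

lemma erase_prod_mem {n : ℕ} (v : Fin n → M) (i : Fin n) :
    ((List.ofFn fun j => ι ℝ (v j)).eraseIdx (i : ℕ)).prod ∈ ⋀[ℝ]^(n-1) M := by
  have hmem : ∀ x ∈ (List.ofFn fun j => ι ℝ (v j)).eraseIdx (i : ℕ),
      x ∈ LinearMap.range (ι ℝ (M := M)) := by
    intro x hx
    have hx' : x ∈ List.ofFn fun j => ι ℝ (v j) := List.mem_of_mem_eraseIdx hx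
    obtain ⟨j, rfl⟩ := List.mem_ofFn.mp hx'
    exact LinearMap.mem_range_self _ _
  have hlen : ((List.ofFn fun j => ι ℝ (v j)).eraseIdx (i : ℕ)).length = n - 1 := by
    rw [List.length_eraseIdx, List.length_ofFn]
    simp [i.isLt]
  have := list_prod_mem_pow (LinearMap.range (ι ℝ (M := M))) _ hmem
  rw [hlen] at this
  exact this

variable (cU : U → Module.End ℝ (ExteriorAlgebra ℝ U))
variable (cW : (Fin m → ℝ) → Module.End ℝ (ExteriorAlgebra ℝ (Fin m → ℝ)))
variable (g : U →ₗ[ℝ] U →ₗ[ℝ] ℝ) (η : (Fin m → ℝ) →ₗ[ℝ] (Fin m → ℝ) →ₗ[ℝ] ℝ)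
variable (u : Fin m → U)
variable (hcU : ∀ (x : U) (n : ℕ) (v : Fin n → U),
      cU x (wedgeL v) = ∑ i : Fin n, ((-1 : ℝ) ^ (i : ℕ) * g x (v i)) •
        ((List.ofFn fun j => ι ℝ (v j)).eraseIdx (i : ℕ)).prod)
variable (hcW : ∀ (y : Fin m → ℝ) (n : ℕ) (v : Fin n → (Fin m → ℝ)),
      cW y (wedgeL v) = ∑ i : Fin n, ((-1 : ℝ) ^ (i : ℕ) * η y (v i)) •
        ((List.ofFn fun j => ι ℝ (v j)).eraseIdx (i : ℕ)).prod)

include hcU hcW in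
lemma trOp_mem (k h : ℕ) : ∀ Φ ∈ bideg U m k h,
    trOp u cU cW Φ ∈ bideg U m (k-1) (h-1) := by
  have hle : bideg U m k h ≤ Submodule.comap (trOp u cU cW) (bideg U m (k-1) (h-1)) := by
    refine bideg_le k h _ ?_
    intro v w
    rw [Submodule.mem_comap, trOp_tmul]
    refine Submodule.sum_mem _ fun b _ => ?_
    refine Submodule.apply_mem_map₂ _ ?_ ?_
    · rw [hcU]
      exact Submodule.sum_mem _ fun i _ => Submodule.smul_mem _ _ (erase_prod_mem v i)
    · rw [hcW]
      exact Submodule.sum_mem _ fun i _ => Submodule.smul_mem _ _ (erase_prod_mem w i)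
  exact fun Φ hΦ => hle hΦ

include hcU in
lemma trOp_zero_left (h : ℕ) : ∀ Φ ∈ bideg U m 0 h, trOp u cU cW Φ = 0 := by
  have hle : bideg U m 0 h ≤ LinearMap.ker (trOp u cU cW) := by
    refine bideg_le 0 h _ ?_
    intro v w
    rw [LinearMap.mem_ker, trOp_tmul]
    refine Finset.sum_eq_zero fun b _ => ?_
    rw [hcU]
    simp
  exact fun Φ hΦ => hle hΦ

include hcW in
lemma trOp_zero_right (k : ℕ) : ∀ Φ ∈ bideg U m k 0, trOp u cU cW Φ = 0 := by
  have hle : bideg U m k 0 ≤ LinearMap.ker (trOp u cU cW) := by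
    refine bideg_le k 0 _ ?_
    intro v w
    rw [LinearMap.mem_ker, trOp_tmul]
    refine Finset.sum_eq_zero fun b _ => ?_
    rw [hcW]
    simp
  exact fun Φ hΦ => hle hΦ

section main
variable (ε : Fin m → ℝ)
variable (hgab : ∀ a b, g (u b) (u a) = if b = a then ε a else 0)
variable (hηab : ∀ a b : Fin m, η (Pi.single b 1) (Pi.single a 1) = if b = a then ε a else 0)
variable (hrecU : ∀ x : U, ∑ a, (ε a * g (u a) x) • u a = x)
variable (hrecW : ∀ x : Fin m → ℝ, ∑ a, (ε a * η (Pi.single a 1) x) • (Pi.single a 1 : Fin m → ℝ) = x)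
variable (hε : ∀ a, ε a * ε a = 1)

include hcU hcW hgab hηab hrecU hrecW hε in
lemma base_ext (k h : ℕ) : ∀ Φ ∈ bideg U m k h,
    trOp u cU cW (solder u * Φ)
      = solder u * trOp u cU cW Φ + ((m : ℝ) - (k : ℝ) - (h : ℝ)) • Φ := by
  intro Φ hΦ
  have key := eq_on_bideg k h
    ((trOp u cU cW) ∘ₗ (LinearMap.mulLeft ℝ (solder u)))
    ((LinearMap.mulLeft ℝ (solder u)) ∘ₗ (trOp u cU cW)
      + ((m : ℝ) - (k : ℝ) - (h : ℝ)) • LinearMap.id)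
    (fun v w => by
      simp only [LinearMap.comp_apply, LinearMap.add_apply, LinearMap.smul_apply,
        LinearMap.id_apply, LinearMap.mulLeft_apply]
      exact base_lemma g η cU cW u ε hcU hcW hgab hηab hrecU hrecW hε v w)
    Φ hΦ
  simpa only [LinearMap.comp_apply, LinearMap.add_apply, LinearMap.smul_apply,
    LinearMap.id_apply, LinearMap.mulLeft_apply] using key

include hcU hcW hgab hηab hrecU hrecW hε in
lemma iterated : ∀ (r k h : ℕ) (Φ : Omega U m), Φ ∈ bideg U m k h →
    (trOp u cU cW ^ (r + 1)) (solder u * Φ)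
      = solder u * (trOp u cU cW ^ (r + 1)) Φ
        + (((r : ℝ) + 1) * ((m : ℝ) - (k : ℝ) - (h : ℝ) + (r : ℝ))) •
            (trOp u cU cW ^ r) Φ := by
  intro r
  induction r with
  | zero =>
    intro k h Φ hΦ
    rw [pow_one, pow_zero, Module.End.one_apply,
      base_ext cU cW g η u hcU hcW ε hgab hηab hrecU hrecW hε k h Φ hΦ]
    norm_num
  | succ r ih =>
    intro k h Φ hΦ
    have hpow : ∀ (n : ℕ) (z : Omega U m),
        (trOp u cU cW ^ (n + 1)) z = (trOp u cU cW ^ n) (trOp u cU cW z) := by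
      intro n z
      rw [pow_succ, Module.End.mul_apply]
    rw [hpow (r + 1) (solder u * Φ),
      base_ext cU cW g η u hcU hcW ε hgab hηab hrecU hrecW hε k h Φ hΦ, map_add, map_smul]
    by_cases hk : k = 0
    · subst hk
      have htr : trOp u cU cW Φ = 0 := trOp_zero_left cU cW g u hcU h Φ hΦ
      rw [htr]
      simp [hpow r Φ, hpow (r+1) Φ, htr]
    by_cases hh : h = 0
    · subst hh
      have htr : trOp u cU cW Φ = 0 := trOp_zero_right cU cW η u hcW k Φ hΦ
      rw [htr]
      simp [hpow r Φ, hpow (r+1) Φ, htr]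
    obtain ⟨k', rfl⟩ : ∃ k', k = k' + 1 :=
      ⟨k - 1, (Nat.succ_pred_eq_of_pos (Nat.pos_of_ne_zero hk)).symm⟩
    obtain ⟨h', rfl⟩ : ∃ h', h = h' + 1 :=
      ⟨h - 1, (Nat.succ_pred_eq_of_pos (Nat.pos_of_ne_zero hh)).symm⟩
    have hmem : trOp u cU cW Φ ∈ bideg U m k' h' := by
      have := trOp_mem cU cW g η u hcU hcW (k' + 1) (h' + 1) Φ hΦ
      simpa using this
    rw [ih k' h' (trOp u cU cW Φ) hmem, ← hpow r Φ, ← hpow (r + 1) Φ]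
    rw [add_assoc, ← add_smul]
    congr 1
    push_cast
    ring
end main


/-- Iterated trace formula:
`tr^{r+1}(θ ⩕ Φ) = θ ⩕ tr^{r+1}(Φ) + (r+1)(m − k − h + r) tr^r(Φ)`. -/
theorem stmt_14 (m q s k h : ℕ) (hm : q + s = m)
    (U : Type) [AddCommGroup U] [Module ℝ U]
    (η : (Fin m → ℝ) →ₗ[ℝ] (Fin m → ℝ) →ₗ[ℝ] ℝ)
    (hη : ∀ v w, η v w = ∑ a : Fin _, (if (a : ℕ) < s then (-1 : ℝ) else 1) * v a * w a)
    (g : U →ₗ[ℝ] U →ₗ[ℝ] ℝ) (u : Module.Basis (Fin m) ℝ U)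
    (hg : ∀ a b, g (u a) (u b) = if a = b then (if (a : ℕ) < s then (-1 : ℝ) else 1) else 0)
    (cU : U → Module.End ℝ (ExteriorAlgebra ℝ U))
    (hcU : ∀ (x : U) (n : ℕ) (v : Fin n → U),
      cU x (wedgeL v) = ∑ i : Fin n, ((-1 : ℝ) ^ (i : ℕ) * g x (v i)) •
        ((List.ofFn fun j => ι ℝ (v j)).eraseIdx (i : ℕ)).prod)
    (cW : (Fin m → ℝ) → Module.End ℝ (ExteriorAlgebra ℝ (Fin m → ℝ)))
    (hcW : ∀ (y : Fin m → ℝ) (n : ℕ) (v : Fin n → (Fin m → ℝ)),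
      cW y (wedgeL v) = ∑ i : Fin n, ((-1 : ℝ) ^ (i : ℕ) * η y (v i)) •
        ((List.ofFn fun j => ι ℝ (v j)).eraseIdx (i : ℕ)).prod)
    (r : ℕ) (Φ : Omega U m) (hΦ : Φ ∈ bideg U m k h) :
    (trOp (fun a => u a) cU cW ^ (r + 1)) (solder (fun a => u a) * Φ) =
      solder (fun a => u a) * (trOp (fun a => u a) cU cW ^ (r + 1)) Φ +
        (((r : ℝ) + 1) * ((m : ℝ) - (k : ℝ) - (h : ℝ) + (r : ℝ))) •
          (trOp (fun a => u a) cU cW ^ r) Φ := by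
  set ε : Fin m → ℝ := fun a => if (a : ℕ) < s then (-1 : ℝ) else 1 with hεdef
  have hε : ∀ a, ε a * ε a = 1 := by
    intro a
    by_cases ha : (a : ℕ) < s <;> simp [hεdef, ha]
  have hgab : ∀ a b, g (u b) (u a) = if b = a then ε a else 0 := by
    intro a b
    rw [hg]
    by_cases hba : b = a <;> simp [hba, hεdef]
  have hηx : ∀ (a : Fin m) (x : Fin m → ℝ), η (Pi.single a 1) x = ε a * x a := by
    intro a x
    rw [hη, Finset.sum_eq_single a]
    · simp [hεdef]
    · intro c _ hca
      simp [Pi.single_apply, hca]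
    · simp
  have hηab : ∀ a b : Fin m, η (Pi.single b 1) (Pi.single a 1) = if b = a then ε a else 0 := by
    intro a b
    rw [hηx]
    by_cases hba : b = a <;> simp [Pi.single_apply, hba, hεdef]
  have hrecW : ∀ x : Fin m → ℝ,
      ∑ a, (ε a * η (Pi.single a 1) x) • (Pi.single a 1 : Fin m → ℝ) = x := by
    intro x
    have : ∀ a : Fin m, (ε a * η (Pi.single a 1) x) • (Pi.single a 1 : Fin m → ℝ)
        = Pi.single a (x a) := by
      intro a
      rw [hηx, ← mul_assoc, hε, one_mul, ← Pi.single_smul, smul_eq_mul, mul_one]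
    rw [Finset.sum_congr rfl fun a _ => this a]
    exact Finset.univ_sum_single x
  have hgx : ∀ (a : Fin m) (x : U), g (u a) x = ε a * u.repr x a := by
    intro a x
    conv_lhs => rw [← u.sum_repr x]
    rw [map_sum, Finset.sum_eq_single a]
    · rw [map_smul, smul_eq_mul, hg]
      simp [hεdef, mul_comm]
    · intro b _ hba
      rw [map_smul, smul_eq_mul, hg]
      simp [Ne.symm hba]
    · simp
  have hrecU : ∀ x : U, ∑ a, (ε a * g (u a) x) • u a = x := by
    intro x
    have : ∀ a : Fin m, (ε a * g (u a) x) • u a = u.repr x a • u a := by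
      intro a
      rw [hgx, ← mul_assoc, hε, one_mul]
    rw [Finset.sum_congr rfl fun a _ => this a]
    exact u.sum_repr x
  exact iterated cU cW g η (fun a => u a) hcU hcW ε hgab hηab hrecU hrecW hε r k h Φ hΦ
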